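/- arXiv:2504.17948 — 3 statements merged into one kernel-verified Lean document; each statement's English description precedes it below -/
import Mathlib

section
/- Let (F₀, c₀) be a project with index r₀ ≥ 0, and let w₀(y) = (y - r₀)⁺. For any other project (F₁, c₁) with index r₁ ≥ r₀, the w₀-induced index of (F₁, c₁) equals r₁ - r₀. In particular, the debt contract w₀ preserves the ordering of indices among projects with index at least r₀. -/
open MeasureTheory

/-- Let `(F₀, c₀)` have index `r₀ ≥ 0` and let `w₀ y = (y - r₀)⁺`.
For any other project `(F₁, c₁)` with index `r₁ ≥ r₀`, the `w₀`-induced index of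
`(F₁, c₁)` (smallest solution `r` of `c₁ = ∫ (w₀ y - r)⁺ dF₁`) equals `r₁ - r₀`.
In particular `w₀` preserves the ordering of indices among projects with index ≥ `r₀`. -/
theorem stmt_2 (F₀ F₁ : Measure ℝ) [IsProbabilityMeasure F₀] [IsProbabilityMeasure F₁]
    (hnn₀ : ∀ᵐ y ∂F₀, 0 ≤ y) (hnn₁ : ∀ᵐ y ∂F₁, 0 ≤ y)
    (hInt₀ : Integrable id F₀) (hInt₁ : Integrable id F₁)
    (c₀ c₁ : ℝ) (hc₀ : 0 ≤ c₀) (hc₁ : 0 ≤ c₁)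
    (r₀ r₁ : ℝ) (hr₀ : 0 ≤ r₀) (hr₀₁ : r₀ ≤ r₁)
    (hIndex₀ : IsLeast {r : ℝ | c₀ = ∫ y, max (y - r) 0 ∂F₀} r₀)
    (hIndex₁ : IsLeast {r : ℝ | c₁ = ∫ y, max (y - r) 0 ∂F₁} r₁) :
    IsLeast {r : ℝ | c₁ = ∫ y, max (max (y - r₀) 0 - r) 0 ∂F₁} (r₁ - r₀) := by
  have hint : ∀ a : ℝ, Integrable (fun y => max (y - a) 0) F₁ := by
    intro a
    have h1 : Integrable (fun y : ℝ => y - a) F₁ := hInt₁.sub (integrable_const a)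
    exact h1.sup (integrable_const 0)
  have key : ∀ r : ℝ, 0 ≤ r → ∀ y : ℝ,
      max (max (y - r₀) 0 - r) 0 = max (y - (r₀ + r)) 0 := by
    intro r hr y
    rcases le_total y r₀ with h | h
    · rw [max_eq_right (by linarith : y - r₀ ≤ (0:ℝ)),
        max_eq_right (by linarith : (0:ℝ) - r ≤ 0),
        max_eq_right (by linarith : y - (r₀ + r) ≤ 0)]
    · rw [max_eq_left (by linarith : (0:ℝ) ≤ y - r₀)]
      congr 1
      ring
  constructor
  · show c₁ = _
    have h1 : (∫ y, max (max (y - r₀) 0 - (r₁ - r₀)) 0 ∂F₁)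
        = ∫ y, max (y - r₁) 0 ∂F₁ := by
      apply integral_congr_ae
      filter_upwards with y
      rw [key (r₁ - r₀) (by linarith) y]
      congr 1
      ring
    rw [h1]
    exact hIndex₁.1
  · intro r hr
    rcases le_or_gt 0 r with h0 | h0
    · have hmem : c₁ = ∫ y, max (y - (r₀ + r)) 0 ∂F₁ := by
        rw [hr]
        apply integral_congr_ae
        filter_upwards with y
        exact key r h0 y
      have := hIndex₁.2 hmem
      linarith
    · exfalso
      have heq : (∫ y, max (max (y - r₀) 0 - r) 0 ∂F₁)
          = (∫ y, max (y - r₀) 0 ∂F₁) - r := by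
        have h1 : (∫ y, max (max (y - r₀) 0 - r) 0 ∂F₁)
            = ∫ y, (max (y - r₀) 0 - r) ∂F₁ := by
          apply integral_congr_ae
          filter_upwards with y
          exact max_eq_left (by linarith [le_max_right (y - r₀) (0:ℝ)])
        rw [h1, integral_sub (hint r₀) (integrable_const r), integral_const,
          probReal_univ]
        simp
      have hmono : (∫ y, max (y - r₁) 0 ∂F₁) ≤ ∫ y, max (y - r₀) 0 ∂F₁ := by
        apply integral_mono (hint r₁) (hint r₀)
        intro y
        exact max_le_max (by linarith) le_rfl
      have hc := hIndex₁.1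
      simp only [Set.mem_setOf_eq] at hr hc
      rw [heq] at hr
      linarith
end

section
/- Let (F₀, c₀) be a project with E_F₀[y] ≥ c₀, surplus s₀ = E_F₀[y] - c₀, and index r₀ the smallest solution of c₀ = ∫ (y - r₀)⁺ dF₀(y). Then r₀ ≥ s₀, with strict inequality whenever F₀ is not a point mass (i.e., whenever ∫ (y - s₀)⁺ dF₀ > ∫ (y - s₀) dF₀). -/
open MeasureTheory

/-- For a project `(F₀, c₀)` with `E[y] ≥ c₀`, surplus `s₀ = E[y] - c₀`,
and index `r₀` (smallest solution of `c₀ = ∫ (y - r₀)⁺ dF₀`), we have `r₀ ≥ s₀`,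
strictly whenever `∫ (y - s₀)⁺ dF₀ > ∫ (y - s₀) dF₀`. -/
theorem stmt_4 (F₀ : Measure ℝ) [IsProbabilityMeasure F₀]
    (hnn : ∀ᵐ y ∂F₀, 0 ≤ y) (hInt : Integrable id F₀)
    (c₀ : ℝ) (hc₀ : 0 ≤ c₀) (hE : c₀ ≤ ∫ y, y ∂F₀)
    (s₀ : ℝ) (hs₀ : s₀ = (∫ y, y ∂F₀) - c₀)
    (r₀ : ℝ) (hIndex : IsLeast {r : ℝ | c₀ = ∫ y, max (y - r) 0 ∂F₀} r₀) :
    s₀ ≤ r₀ ∧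
      ((∫ y, (y - s₀) ∂F₀) < ∫ y, max (y - s₀) 0 ∂F₀ → s₀ < r₀) := by
  have hIntSub : ∀ r : ℝ, Integrable (fun y => y - r) F₀ := fun r =>
    hInt.sub (integrable_const r)
  have hIntMax : ∀ r : ℝ, Integrable (fun y => max (y - r) 0) F₀ := fun r =>
    (hIntSub r).pos_part
  have hsubint : ∀ r : ℝ, (∫ y, (y - r) ∂F₀) = (∫ y, y ∂F₀) - r := by
    intro r
    have h := integral_sub hInt (integrable_const r)
    simp only [id, integral_const, measure_univ, ENNReal.toReal_one, probReal_univ, one_smul, smul_eq_mul] at h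
    linarith [h]
  have hle : ∀ r : ℝ, (∫ y, (y - r) ∂F₀) ≤ ∫ y, max (y - r) 0 ∂F₀ := by
    intro r
    exact integral_mono (hIntSub r) (hIntMax r) (fun y => le_max_left _ _)
  have hr₀ : c₀ = ∫ y, max (y - r₀) 0 ∂F₀ := hIndex.1
  have h1 : s₀ ≤ r₀ := by
    have := hle r₀
    rw [hsubint r₀, ← hr₀] at this
    linarith [hs₀]
  refine ⟨h1, fun hstrict => ?_⟩
  by_contra hcon
  push_neg at hcon
  -- so r₀ ≤ s₀, hence max (y - s₀) 0 ≤ max (y - r₀) 0 pointwise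
  have hmono : (∫ y, max (y - s₀) 0 ∂F₀) ≤ ∫ y, max (y - r₀) 0 ∂F₀ := by
    refine integral_mono (hIntMax s₀) (hIntMax r₀) (fun y => ?_)
    exact max_le_max (by linarith) le_rfl
  have hcs : (∫ y, (y - s₀) ∂F₀) = c₀ := by
    rw [hsubint s₀, hs₀]; ring
  rw [hcs] at hstrict
  rw [← hr₀] at hmono
  linarith
end

section
/- Let F₀ have finite mean, c₀ > 0, k ∈ [0, 1) with (1-k)·E_F₀[y] ≥ c₀. Then there exists a unique z_k ≥ 0 such that (1-k)·∫ (y - z_k)⁺ dF₀(y) = c₀, and the contract w(y) = (1-k)·(y - z_k)⁺ is diversion-proof (its slope never exceeds 1-k) and extracts full surplus (∫ w dF₀ = c₀). -/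
open MeasureTheory

/-- For `k ∈ [0,1)` with `(1-k)·E[y] ≥ c₀ > 0`, there is a unique `z_k ≥ 0`
with `(1-k)·∫ (y - z_k)⁺ dF₀ = c₀`, and the contract `w y = (1-k)·(y - z_k)⁺` is
diversion-proof (slope at most `1-k`) and extracts full surplus. -/
theorem stmt_12 (F₀ : Measure ℝ) [IsProbabilityMeasure F₀]
    (hnn : ∀ᵐ y ∂F₀, 0 ≤ y) (hInt : Integrable id F₀)
    (c₀ : ℝ) (hc₀ : 0 < c₀) (k : ℝ) (hk : k ∈ Set.Ico (0:ℝ) 1)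
    (hE : c₀ ≤ (1 - k) * ∫ y, y ∂F₀) :
    ∃ zk : ℝ, 0 ≤ zk ∧ (1 - k) * (∫ y, max (y - zk) 0 ∂F₀) = c₀ ∧
      (∀ z' : ℝ, 0 ≤ z' → (1 - k) * (∫ y, max (y - z') 0 ∂F₀) = c₀ → z' = zk) ∧
      (∀ x y : ℝ, 0 ≤ x → x ≤ y →
        (1 - k) * max (y - zk) 0 - (1 - k) * max (x - zk) 0 ≤ (1 - k) * (y - x)) ∧
      (∫ y, (1 - k) * max (y - zk) 0 ∂F₀) = c₀ := by
  obtain ⟨hk0, hk1⟩ := hk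
  have h1k : 0 < 1 - k := by linarith
  set t := c₀ / (1 - k) with ht
  have ht0 : 0 < t := div_pos hc₀ h1k
  have hint : ∀ z : ℝ, Integrable (fun y => max (y - z) 0) F₀ := by
    intro z
    have h := (hInt.sub (integrable_const z)).pos_part
    simpa using h
  set φ : ℝ → ℝ := fun z => ∫ y, max (y - z) 0 ∂F₀ with hφ
  -- φ is 1-Lipschitz, hence continuous
  have hlip : LipschitzWith 1 φ := by
    apply LipschitzWith.of_dist_le_mul
    intro a b
    rw [Real.dist_eq, Real.dist_eq, NNReal.coe_one, one_mul]
    have h1 : φ a - φ b = ∫ y, (max (y - a) 0 - max (y - b) 0) ∂F₀ := by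
      rw [integral_sub (hint a) (hint b)]
    rw [h1]
    calc |∫ y, (max (y - a) 0 - max (y - b) 0) ∂F₀|
        ≤ ∫ y, |max (y - a) 0 - max (y - b) 0| ∂F₀ := by simpa [Real.norm_eq_abs] using norm_integral_le_integral_norm (μ := F₀) (fun y => max (y - a) 0 - max (y - b) 0)
      _ ≤ ∫ _y, |a - b| ∂F₀ := by
          apply integral_mono ((hint a).sub (hint b)).abs (integrable_const _)
          intro y
          have := abs_max_sub_max_le_abs (y - a) (y - b) 0
          calc |max (y - a) 0 - max (y - b) 0| ≤ |(y - a) - (y - b)| := this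
            _ = |a - b| := by rw [abs_sub_comm]; ring_nf
      _ = |a - b| := by simp
  have hcont : Continuous φ := hlip.continuous
  -- φ 0 ≥ t
  have hφ0 : φ 0 = ∫ y, y ∂F₀ := by
    apply integral_congr_ae
    filter_upwards [hnn] with y hy
    simp [max_eq_left, hy]
  have ht_le : t ≤ φ 0 := by
    rw [hφ0, ht, div_le_iff₀ h1k]
    linarith [hE, mul_comm (1 - k) (∫ y, y ∂F₀)]
  -- φ n → 0
  have htend : Filter.Tendsto (fun n : ℕ => φ n) Filter.atTop (nhds 0) := by
    have h0 : (0 : ℝ) = ∫ _y, (0:ℝ) ∂F₀ := by simp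
    rw [h0]
    apply tendsto_integral_of_dominated_convergence (fun y => |y|)
    · intro n; exact (hint n).aestronglyMeasurable
    · exact hInt.abs
    · intro n
      filter_upwards [] with y
      rw [Real.norm_eq_abs, abs_of_nonneg (le_max_right _ _)]
      calc max (y - n) 0 ≤ max y 0 := max_le_max (by linarith [Nat.cast_nonneg (α := ℝ) n]) le_rfl
        _ ≤ |y| := by rcases le_total y 0 with h | h <;> simp [max_eq_left, max_eq_right, h, abs_of_nonneg, abs_of_nonpos] <;> linarith
    · filter_upwards [] with y
      apply Filter.Tendsto.congr' _ tendsto_const_nhds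
      obtain ⟨N, hN⟩ := exists_nat_ge y
      filter_upwards [Filter.eventually_ge_atTop N] with n hn
      have : y - n ≤ 0 := by
        have : (N:ℝ) ≤ n := Nat.cast_le.mpr hn
        linarith
      simp [max_eq_right this]
  -- get M with φ M ≤ t
  obtain ⟨N, hN⟩ := (htend.eventually (eventually_le_nhds ht0)).exists
  -- IVT
  have hIVT : t ∈ φ '' Set.Icc 0 (N:ℝ) := by
    apply intermediate_value_Icc' (Nat.cast_nonneg N) hcont.continuousOn
    exact ⟨hN, ht_le⟩
  obtain ⟨zk, hzk_mem, hzk_eq⟩ := hIVT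
  have hzk0 : 0 ≤ zk := hzk_mem.1
  have hmain : (1 - k) * φ zk = c₀ := by
    rw [hzk_eq, ht]; field_simp
  -- strict monotonicity where positive
  have key : ∀ a b : ℝ, a < b → 0 < φ b → φ b < φ a := by
    intro a b hab hpos
    have hμ : 0 < F₀ (Set.Ioi b) := by
      rcases (zero_le : (0:ENNReal) ≤ F₀ (Set.Ioi b)).lt_or_eq with h | h
      · exact h
      · exfalso
        have hae : ∀ᵐ y ∂F₀, y ∉ Set.Ioi b := by
          rw [ae_iff]
          simpa [Set.Ioi] using h.symm
        have : φ b = 0 := by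
          rw [hφ]
          rw [integral_eq_zero_iff_of_nonneg_ae]
          · filter_upwards [hae] with y hy
            simp only [Set.mem_Ioi, not_lt] at hy
            simp [max_eq_right, sub_nonpos.mpr hy]
          · filter_upwards [] with y; exact le_max_right _ _
          · exact hint b
        rw [this] at hpos; exact lt_irrefl _ hpos
    have hdiffpos : 0 < ∫ y, (max (y - a) 0 - max (y - b) 0) ∂F₀ := by
      rw [integral_pos_iff_support_of_nonneg_ae]
      · apply lt_of_lt_of_le hμ
        apply measure_mono
        intro y hy
        simp only [Set.mem_Ioi] at hy
        simp only [Function.mem_support]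
        have h1 : max (y - a) 0 = y - a := max_eq_left (by linarith)
        have h2 : max (y - b) 0 = y - b := max_eq_left (by linarith)
        rw [h1, h2]
        intro h; apply absurd h; intro h'; nlinarith
      · filter_upwards [] with y
        simp only [Pi.zero_apply]
        have : max (y - b) 0 ≤ max (y - a) 0 := max_le_max (by linarith) le_rfl
        linarith
      · exact (hint a).sub (hint b)
    have : φ a - φ b = ∫ y, (max (y - a) 0 - max (y - b) 0) ∂F₀ := by
      rw [hφ]; rw [integral_sub (hint a) (hint b)]
    linarith
  refine ⟨zk, hzk0, hmain, ?_, ?_, ?_⟩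
  · intro z' _ hz'
    have hz't : φ z' = φ zk := by
      have : (1 - k) * φ z' = (1 - k) * φ zk := by rw [hmain, hz']
      exact mul_left_cancel₀ (ne_of_gt h1k) this
    have hposk : 0 < φ zk := by
      have : (1 - k) * φ zk = c₀ := hmain
      nlinarith
    rcases lt_trichotomy z' zk with h | h | h
    · exfalso; have := key z' zk h hposk; linarith
    · exact h
    · exfalso
      have hposz' : 0 < φ z' := by rw [hz't]; exact hposk
      have := key zk z' h hposz'; linarith
  · intro x y _hx hxy
    have h1 : max (y - zk) 0 - max (x - zk) 0 ≤ y - x := by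
      have h2 : max (y - zk) 0 ≤ max (x - zk) 0 + (y - x) := by
        apply max_le
        · have : x - zk ≤ max (x - zk) 0 := le_max_left _ _
          linarith
        · have : (0:ℝ) ≤ max (x - zk) 0 := le_max_right _ _
          linarith
      linarith
    nlinarith [h1k.le]
  · rw [integral_const_mul]
    exact hmain
end
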